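/- arXiv:2009.07371 — 3 statements merged into one kernel-verified Lean document; each statement's English description precedes it below -/
import Mathlib

section
/- Let H be a finite-dimensional complex Hilbert space and A = (A_x)_{x ∈ Ω_A}, B = (B_y)_{y ∈ Ω_B} observables on H. Then the Lüders instrument of the sequential product equals the composition of the Lüders instruments, i.e. (A_x ∘ B_y)^{1/2} ρ (A_x ∘ B_y)^{1/2} = B_y^{1/2} A_x^{1/2} ρ A_x^{1/2} B_y^{1/2} holds for all states ρ and all x ∈ Ω_A, y ∈ Ω_B, if and only if A_x B_y = B_y A_x for all x ∈ Ω_A, y ∈ Ω_B. -/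
open Matrix ComplexOrder

/-- Port: `Matrix.PosSemidef.sqrt` was removed from Mathlib; restored with its old definition. -/
noncomputable def Matrix.PosSemidef.sqrt {n : Type*} [Fintype n] [DecidableEq n]
    {A : Matrix n n ℂ} (hA : A.PosSemidef) : Matrix n n ℂ :=
  hA.1.eigenvectorUnitary.1 * diagonal ((↑) ∘ (√·) ∘ hA.1.eigenvalues) *
  (star hA.1.eigenvectorUnitary : Matrix n n ℂ)

/-- The sequential product `a ∘ b = a^{1/2} b a^{1/2}` of effects, where `a^{1/2}` is the
unique positive semidefinite square root of `a`. -/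
noncomputable def seqProd {n : Type*} [Fintype n] [DecidableEq n]
    {a : Matrix n n ℂ} (ha : a.PosSemidef) (b : Matrix n n ℂ) : Matrix n n ℂ :=
  ha.sqrt * b * ha.sqrt

theorem seqProd_posSemidef {n : Type*} [Fintype n] [DecidableEq n]
    {a : Matrix n n ℂ} (ha : a.PosSemidef) {b : Matrix n n ℂ} (hb : b.PosSemidef) :
    (seqProd ha b).PosSemidef := by
  have h := hb.mul_mul_conjTranspose_same ha.sqrt
  have hs : ha.sqrtᴴ = ha.sqrt := by
    simp [Matrix.PosSemidef.sqrt, Matrix.conjTranspose_mul, Matrix.diagonal_conjTranspose,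
      Matrix.star_eq_conjTranspose, mul_assoc]
    congr 3
    funext i
    simp
  rwa [hs] at h

open scoped MatrixOrder in
theorem Matrix.PosSemidef.sqrt_eq_cfcSqrt {n : Type*} [Fintype n] [DecidableEq n]
    {A : Matrix n n ℂ} (hA : A.PosSemidef) : hA.sqrt = CFC.sqrt A := by
  rw [CFC.sqrt_eq_cfc, cfc_nnreal_eq_real _ A hA.nonneg, hA.1.cfc_eq]
  simp only [IsHermitian.cfc, Matrix.PosSemidef.sqrt, Unitary.conjStarAlgAut_apply,
    Unitary.coe_star]
  congr 3
  funext i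
  simp [Real.coe_toNNReal', max_eq_left (hA.eigenvalues_nonneg i)]

open scoped MatrixOrder in
theorem Matrix.PosSemidef.posSemidef_sqrt {n : Type*} [Fintype n] [DecidableEq n]
    {A : Matrix n n ℂ} (hA : A.PosSemidef) : hA.sqrt.PosSemidef := by
  rw [hA.sqrt_eq_cfcSqrt]
  exact (CFC.sqrt_nonneg A).posSemidef

open scoped MatrixOrder in
theorem Matrix.PosSemidef.sqrt_mul_self {n : Type*} [Fintype n] [DecidableEq n]
    {A : Matrix n n ℂ} (hA : A.PosSemidef) : hA.sqrt * hA.sqrt = A := by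
  rw [hA.sqrt_eq_cfcSqrt]
  exact CFC.sqrt_mul_sqrt_self A hA.nonneg

open scoped MatrixOrder in
theorem Matrix.PosSemidef.eq_sqrt_of_sq_eq {n : Type*} [Fintype n] [DecidableEq n]
    {T A : Matrix n n ℂ} (hT : T.PosSemidef) (hA : A.PosSemidef) (h : T ^ 2 = A) :
    T = hA.sqrt := by
  rw [hA.sqrt_eq_cfcSqrt]
  exact (CFC.sqrt_unique (by rw [← sq]; exact h) hT.nonneg).symm

section Helpers

variable {n : Type*} [Fintype n] [DecidableEq n]

private lemma sqrt_commute' {a b : Matrix n n ℂ} (ha : a.PosSemidef) (hab : a * b = b * a) :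
    ha.sqrt * b = b * ha.sqrt := by
  set U : Matrix n n ℂ := (ha.1.eigenvectorUnitary : Matrix n n ℂ) with hU
  set V : Matrix n n ℂ := star (ha.1.eigenvectorUnitary : Matrix n n ℂ) with hV
  have hU1 : V * U = 1 := Unitary.coe_star_mul_self ha.1.eigenvectorUnitary
  have hU2 : U * V = 1 := Unitary.coe_mul_star_self ha.1.eigenvectorUnitary
  set e : n → ℂ := RCLike.ofReal ∘ ha.1.eigenvalues with he
  set d : n → ℂ := RCLike.ofReal ∘ Real.sqrt ∘ ha.1.eigenvalues with hd
  have hspec : a = U * diagonal e * V := ha.1.spectral_theorem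
  have hsq : ha.sqrt = U * diagonal d * V := rfl
  set B' : Matrix n n ℂ := V * b * U with hB'
  have hD : V * a * U = diagonal e := by
    rw [hspec, show V * (U * diagonal e * V) * U = (V * U) * diagonal e * (V * U) from by
      noncomm_ring, hU1, one_mul, mul_one]
  have hprod : ∀ p q : Matrix n n ℂ, (V*p*U) * (V*q*U) = V*(p*q)*U := fun p q => by
    rw [show (V*p*U)*(V*q*U) = V*(p*(U*V)*q)*U from by noncomm_ring, hU2]
    noncomm_ring
  have hprod2 : ∀ p q : Matrix n n ℂ, (U*p*V) * (U*q*V) = U*(p*q)*V := fun p q => by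
    rw [show (U*p*V)*(U*q*V) = U*(p*(V*U)*q)*V from by noncomm_ring, hU1]
    noncomm_ring
  have hb : U * B' * V = b := by
    rw [hB', show U*(V*b*U)*V = (U*V)*b*(U*V) from by noncomm_ring, hU2, one_mul, mul_one]
  have h1 : diagonal e * B' = B' * diagonal e := by
    rw [← hD, hB', hprod, hprod, hab]
  have h2 : diagonal d * B' = B' * diagonal d := by
    ext i j
    simp only [diagonal_mul, mul_diagonal]
    have h3 : e i * B' i j = B' i j * e j := by
      have := congrFun (congrFun h1 i) j
      simpa [diagonal_mul, mul_diagonal] using this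
    rcases eq_or_ne (B' i j) 0 with h | h
    · simp [h]
    · have h4 : e i = e j := by
        rw [mul_comm (B' i j) (e j)] at h3
        exact mul_right_cancel₀ h h3
      have h5 : ha.1.eigenvalues i = ha.1.eigenvalues j := by
        simpa [he, Complex.ofReal_inj] using h4
      rw [mul_comm]
      simp [hd, h5]
  calc ha.sqrt * b = (U * diagonal d * V) * (U * B' * V) := by rw [hsq, hb]
    _ = U * (diagonal d * B') * V := hprod2 _ _
    _ = U * (B' * diagonal d) * V := by rw [h2]
    _ = (U * B' * V) * (U * diagonal d * V) := (hprod2 _ _).symm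
    _ = b * ha.sqrt := by rw [hsq, hb]

private lemma psd_diag_nonneg' {M : Matrix n n ℂ} (hM : M.PosSemidef) (i : n) : 0 ≤ M i i := by
  have := hM.dotProduct_mulVec_nonneg (Pi.single i 1)
  simpa [dotProduct, mulVec_single, Pi.single_apply, apply_ite] using this

private lemma psd_trace_nonneg' {M : Matrix n n ℂ} (hM : M.PosSemidef) : 0 ≤ M.trace :=
  Finset.sum_nonneg fun i _ => psd_diag_nonneg' hM i

private lemma psd_trace_eq_zero' {M : Matrix n n ℂ} (hM : M.PosSemidef) (h : M.trace = 0) :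
    M = 0 := by
  have hsq : hM.sqrt.conjTranspose * hM.sqrt = M := by
    rw [hM.posSemidef_sqrt.isHermitian.eq, hM.sqrt_mul_self]
  have hdiag : ∀ i, (hM.sqrt.conjTranspose * hM.sqrt) i i
      = star (fun j => hM.sqrt j i) ⬝ᵥ (fun j => hM.sqrt j i) := by
    intro i
    simp [mul_apply, dotProduct, conjTranspose_apply, mul_comm]
  have h0 : ∀ i ∈ Finset.univ, (0:ℂ) ≤ M i i := fun i _ => psd_diag_nonneg' hM i
  have hzero : ∀ i, M i i = 0 := by
    have := (Finset.sum_eq_zero_iff_of_nonneg h0).mp h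
    exact fun i => this i (Finset.mem_univ i)
  have hcol : ∀ i, (fun j => hM.sqrt j i) = 0 := by
    intro i
    have : star (fun j => hM.sqrt j i) ⬝ᵥ (fun j => hM.sqrt j i) = 0 := by
      rw [← hdiag, hsq]; exact hzero i
    exact dotProduct_star_self_eq_zero.mp this
  have : hM.sqrt = 0 := by
    ext j i
    exact congrFun (hcol i) j
  rw [← hM.sqrt_mul_self, this, mul_zero]

private lemma psd_smul' {M : Matrix n n ℂ} (hM : M.PosSemidef) {c : ℂ} (hc : 0 ≤ c) :
    (c • M).PosSemidef := by
  refine PosSemidef.of_dotProduct_mulVec_nonneg ?_ ?_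
  · have hcs : star c = c := by
      rw [Complex.star_def, Complex.conj_eq_iff_im]
      exact ((Complex.le_def.mp hc).2).symm
    show (c • M)ᴴ = c • M
    rw [conjTranspose_smul, hcs, hM.1.eq]
  · intro x
    rw [smul_mulVec, dotProduct_smul]
    exact mul_nonneg hc (hM.dotProduct_mulVec_nonneg x)

/-- rank one matrix `u (star u)ᵀ` -/
private noncomputable def outer (u : n → ℂ) : Matrix n n ℂ :=
  Matrix.of fun a b => u a * star (u b)

private lemma outer_posSemidef (u : n → ℂ) : (outer u).PosSemidef := by
  refine PosSemidef.of_dotProduct_mulVec_nonneg ?_ ?_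
  · ext a b
    simp [outer, conjTranspose_apply, mul_comm]
  · intro x
    have h : star x ⬝ᵥ (outer u *ᵥ x) = (star x ⬝ᵥ u) * star (star x ⬝ᵥ u) := by
      simp only [dotProduct, mulVec, outer, of_apply, star_sum, StarMul.star_mul, star_star,
        Pi.star_apply]
      rw [Finset.sum_mul_sum]
      rw [Finset.sum_congr rfl fun a _ => (Finset.mul_sum _ _ _)]
      refine Finset.sum_congr rfl fun a _ => Finset.sum_congr rfl fun b _ => by ring
    rw [h]
    exact mul_star_self_nonneg _

private lemma mul_outer_mul_apply (S T : Matrix n n ℂ) (u : n → ℂ) (i l : n) :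
    (S * outer u * T) i l = (S i ⬝ᵥ u) * (star u ⬝ᵥ fun b => T b l) := by
  simp only [mul_apply, outer, of_apply, dotProduct, Pi.star_apply]
  rw [Finset.sum_mul_sum]
  rw [Finset.sum_congr rfl fun a _ => (Finset.sum_mul _ _ _)]
  rw [Finset.sum_comm]
  refine Finset.sum_congr rfl fun a _ => Finset.sum_congr rfl fun b _ => by ring

private lemma rank_one_entries {S C D : Matrix n n ℂ}
    (h : ∀ u : n → ℂ, S * outer u * S = C * outer u * D) :
    ∀ i j k l, S i j * S k l = C i j * D k l := by
  intro i j k l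
  have E : ∀ c : ℂ, (S i j + c * S i k) * (S j l + star c * S k l)
      = (C i j + c * C i k) * (D j l + star c * D k l) := by
    intro c
    have h1 := congrFun (congrFun
      (h ((Pi.single j 1 : n → ℂ) + c • (Pi.single k 1 : n → ℂ))) i) l
    rw [mul_outer_mul_apply, mul_outer_mul_apply] at h1
    have hs : star ((Pi.single j 1 : n → ℂ) + c • (Pi.single k 1 : n → ℂ))
        = (Pi.single j 1 : n → ℂ) + star c • (Pi.single k 1 : n → ℂ) := by
      ext b
      simp only [Pi.star_apply, Pi.add_apply, Pi.smul_apply, smul_eq_mul, star_add,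
        star_mul', Pi.single_apply, apply_ite (star : ℂ → ℂ), star_one, star_zero,
        mul_ite, mul_one, mul_zero]
    rw [hs] at h1
    simpa [dotProduct_add, add_dotProduct, dotProduct_smul, smul_dotProduct,
      dotProduct_single, single_dotProduct, smul_eq_mul, mul_comm] using h1
  have E1 := E 1
  have EI := E Complex.I
  have Em1 := E (-1)
  have EmI := E (-Complex.I)
  simp only [star_one, star_neg, Complex.star_def, Complex.conj_I, one_mul, neg_mul,
    neg_neg, mul_one] at E1 EI Em1 EmI
  have hI : Complex.I * Complex.I = -1 := Complex.I_mul_I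
  linear_combination (E1 + Complex.I * EI - Em1 - Complex.I * EmI
    + (2*(S i j * S k l - C i j * D k l) - 2*(S i k * S j l - C i k * D j l)) * hI) / 4

end Helpers

/-- The Lüders instrument of the sequential product `A ∘ B` equals the
composition of the Lüders instruments of `A` and `B` if and only if `A` and `B` commute. -/
theorem stmt_4 {n : Type*} [Fintype n] [DecidableEq n]
    {ΩA ΩB : Type*} [Fintype ΩA] [Fintype ΩB]
    (A : ΩA → Matrix n n ℂ) (B : ΩB → Matrix n n ℂ)
    (hApos : ∀ x, (A x).PosSemidef) (hAle : ∀ x, (1 - A x).PosSemidef)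
    (hAsum : ∑ x, A x = 1)
    (hBpos : ∀ y, (B y).PosSemidef) (hBle : ∀ y, (1 - B y).PosSemidef)
    (hBsum : ∑ y, B y = 1) :
    (∀ (ρ : Matrix n n ℂ), ρ.PosSemidef → ρ.trace = 1 → ∀ x y,
        (seqProd_posSemidef (hApos x) (hBpos y)).sqrt * ρ *
          (seqProd_posSemidef (hApos x) (hBpos y)).sqrt
        = (hBpos y).sqrt * (hApos x).sqrt * ρ * (hApos x).sqrt * (hBpos y).sqrt)
    ↔ (∀ x y, A x * B y = B y * A x) := by
  constructor
  · -- forward direction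
    intro h x y
    have hseq : (seqProd (hApos x) (B y)).PosSemidef := seqProd_posSemidef (hApos x) (hBpos y)
    set P : Matrix n n ℂ := (hApos x).sqrt with hPdef
    set Q : Matrix n n ℂ := (hBpos y).sqrt with hQdef
    set S : Matrix n n ℂ := hseq.sqrt with hSdef
    have hP : P.PosSemidef := (hApos x).posSemidef_sqrt
    have hQ : Q.PosSemidef := (hBpos y).posSemidef_sqrt
    have hS : S.PosSemidef := hseq.posSemidef_sqrt
    have key0 : ∀ ρ : Matrix n n ℂ, ρ.PosSemidef →
        S * ρ * S = Q * P * ρ * P * Q := by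
      intro ρ hρ
      by_cases h0 : ρ.trace = 0
      · rw [psd_trace_eq_zero' hρ h0]
        simp
      · have ht := psd_trace_nonneg' hρ
        have hinv : (0:ℂ) ≤ ρ.trace⁻¹ := by
          rw [Complex.le_def] at ht ⊢
          constructor
          · rw [Complex.inv_re]
            exact div_nonneg (by simpa using ht.1) (Complex.normSq_nonneg _)
          · rw [Complex.inv_im, ← ht.2]
            simp
        have hρ' : (ρ.trace⁻¹ • ρ).PosSemidef := psd_smul' hρ hinv
        have htr : (ρ.trace⁻¹ • ρ).trace = 1 := by
          rw [trace_smul, smul_eq_mul, inv_mul_cancel₀ h0]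
        have hkey : S * (ρ.trace⁻¹ • ρ) * S = Q * P * (ρ.trace⁻¹ • ρ) * P * Q :=
          h _ hρ' htr x y
        have hL : S * (ρ.trace⁻¹ • ρ) * S = ρ.trace⁻¹ • (S * ρ * S) := by
          rw [mul_smul_comm, smul_mul_assoc]
        have hR : Q * P * (ρ.trace⁻¹ • ρ) * P * Q = ρ.trace⁻¹ • (Q * P * ρ * P * Q) := by
          rw [mul_smul_comm, smul_mul_assoc, smul_mul_assoc]
        rw [hL, hR] at hkey
        exact smul_right_injective (Matrix n n ℂ) (inv_ne_zero h0) hkey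
    have key1 : ∀ u : n → ℂ, S * outer u * S = (Q * P) * outer u * (P * Q) := by
      intro u
      have := key0 (outer u) (outer_posSemidef u)
      calc S * outer u * S = Q * P * outer u * P * Q := this
        _ = (Q * P) * outer u * (P * Q) := by noncomm_ring
    have hent := rank_one_entries key1
    have hPh : Pᴴ = P := hP.isHermitian.eq
    have hQh : Qᴴ = Q := hQ.isHermitian.eq
    have hDC : P * Q = (Q * P)ᴴ := by rw [conjTranspose_mul, hPh, hQh]
    have hAx : A x = P * P := ((hApos x).sqrt_mul_self).symm
    have hBy : B y = Q * Q := ((hBpos y).sqrt_mul_self).symm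
    by_cases hC : (Q * P : Matrix n n ℂ) = 0
    · have hD0 : (P * Q : Matrix n n ℂ) = 0 := by rw [hDC, hC, conjTranspose_zero]
      rw [hAx, hBy, show P * P * (Q * Q) = P * (P * Q) * Q from by noncomm_ring, hD0,
        show Q * Q * (P * P) = Q * (Q * P) * P from by noncomm_ring, hC]
      noncomm_ring
    · obtain ⟨l, hl⟩ : ∃ l, (Q * P) l ≠ 0 := by
        by_contra hcon
        push_neg at hcon
        exact hC (funext hcon)
      obtain ⟨k, hlk⟩ : ∃ k, (Q * P) l k ≠ 0 := by
        by_contra hcon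
        push_neg at hcon
        exact hl (funext hcon)
      have hSkl : ∀ a b, S a b = star (S b a) := fun a b =>
        (congrFun (congrFun hS.isHermitian.eq a) b).symm.trans (conjTranspose_apply _ _ _)
      have hDent : ∀ a b, (P * Q) a b = star ((Q * P) b a) := fun a b => by
        rw [hDC]; exact conjTranspose_apply _ _ _
      -- S k l ≠ 0
      have hm := hent l k k l
      rw [hDent k l] at hm
      have hRHS : (Q * P) l k * star ((Q * P) l k) ≠ 0 :=
        mul_ne_zero hlk (star_ne_zero.mpr hlk)
      have hs0 : S k l ≠ 0 := by
        intro h0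
        rw [h0, mul_zero] at hm
        exact hRHS hm.symm
      set μ : ℂ := (P * Q) k l * (S k l)⁻¹ with hμdef
      have hμ0 : μ ≠ 0 := by
        apply mul_ne_zero
        · rw [hDent k l]
          exact star_ne_zero.mpr hlk
        · exact inv_ne_zero hs0
      have hμ : S = μ • (Q * P) := by
        ext a b
        have := hent a b k l
        simp only [Matrix.smul_apply, smul_eq_mul, hμdef]
        field_simp
        linear_combination this
      have hS2 : S = star μ • (P * Q) := by
        conv_lhs => rw [← hS.isHermitian.eq, hμ, conjTranspose_smul, ← hDC]
      have ht1 : S.trace = μ * (Q * P).trace := by rw [hμ, trace_smul, smul_eq_mul]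
      have ht2 : S.trace = star μ * (Q * P).trace := by
        rw [hS2, trace_smul, smul_eq_mul, trace_mul_comm]
      have hts : S.trace ≠ 0 := by
        intro h0
        have := psd_trace_eq_zero' hS h0
        rw [this] at hs0
        exact hs0 rfl
      have htC : (Q * P).trace ≠ 0 := by
        intro h0
        rw [ht1, h0, mul_zero] at hts
        exact hts rfl
      have hμreal : star μ = μ := mul_right_cancel₀ htC (ht2.symm.trans ht1)
      have hQP : Q * P = P * Q := by
        apply smul_right_injective (Matrix n n ℂ) hμ0
        show μ • (Q * P) = μ • (P * Q)
        rw [← hμ, hS2, hμreal]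
      have hcPQ : Commute P Q := hQP.symm
      have h2 : Commute (P * P) (Q * Q) :=
        (hcPQ.mul_left hcPQ).mul_right (hcPQ.mul_left hcPQ)
      rw [hAx, hBy]
      exact h2
  · -- backward direction
    intro hcomm ρ hρ htρ x y
    set P : Matrix n n ℂ := (hApos x).sqrt with hPdef
    set Q : Matrix n n ℂ := (hBpos y).sqrt with hQdef
    have hPB : P * B y = B y * P := sqrt_commute' (hApos x) (hcomm x y)
    have hQP : Q * P = P * Q := sqrt_commute' (hBpos y) hPB.symm
    have hQs : ((hBpos y).posSemidef_sqrt).sqrt * P = P * ((hBpos y).posSemidef_sqrt).sqrt :=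
      sqrt_commute' (hBpos y).posSemidef_sqrt hQP
    set R : Matrix n n ℂ := ((hBpos y).posSemidef_sqrt).sqrt with hRdef
    have hRR : R * R = Q := (hBpos y).posSemidef_sqrt.sqrt_mul_self
    have hT : (Q * P).PosSemidef := by
      have := ((hApos x).posSemidef_sqrt).mul_mul_conjTranspose_same R
      rw [((hBpos y).posSemidef_sqrt).posSemidef_sqrt.isHermitian.eq] at this
      have heq : R * P * R = Q * P := by
        rw [hQs, mul_assoc, hRR, ← hQP]
      rwa [heq] at this
    have hT2 : (Q * P) ^ 2 = seqProd (hApos x) (B y) := by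
      show (Q * P) ^ 2 = P * B y * P
      rw [← (hBpos y).sqrt_mul_self, pow_two]
      calc (Q * P) * (Q * P) = (P * Q) * (Q * P) := by rw [hQP]
        _ = P * (Q * Q) * P := by noncomm_ring
    have hsqrt : Q * P = (seqProd_posSemidef (hApos x) (hBpos y)).sqrt :=
      hT.eq_sqrt_of_sq_eq (seqProd_posSemidef (hApos x) (hBpos y)) hT2
    rw [← hsqrt]
    calc Q * P * ρ * (Q * P) = Q * P * ρ * (P * Q) := by rw [hQP]
      _ = Q * P * ρ * P * Q := by noncomm_ring
end

section
/- Let H = H1 ⊗ H2 with dim H1 = n1, dim H2 = n2, and let a be an effect on H. Then a = a^1 ⊗ a^2 if and only if a = 0 or a = 1. -/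
open Matrix ComplexOrder Kronecker

/-- The partial trace over the second tensor factor. -/
noncomputable def ptrace2 {n₁ n₂ : Type*} [Fintype n₂] (a : Matrix (n₁ × n₂) (n₁ × n₂) ℂ) :
    Matrix n₁ n₁ ℂ :=
  Matrix.of fun i j => ∑ k, a (i, k) (j, k)

/-- The partial trace over the first tensor factor. -/
noncomputable def ptrace1 {n₁ n₂ : Type*} [Fintype n₁] (a : Matrix (n₁ × n₂) (n₁ × n₂) ℂ) :
    Matrix n₂ n₂ ℂ :=
  Matrix.of fun i j => ∑ k, a (k, i) (k, j)

lemma psd_smul'_s8 {n : Type*} [Fintype n] {M : Matrix n n ℂ} (h : M.PosSemidef)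
    {r : ℂ} (hr : 0 ≤ r) : (r • M).PosSemidef := by
  have hsr : star r = r := by
    rw [Complex.star_def, Complex.conj_eq_iff_im]
    exact (Complex.nonneg_iff.mp hr).2.symm
  rw [posSemidef_iff_dotProduct_mulVec]
  constructor
  · unfold Matrix.IsHermitian; rw [conjTranspose_smul, hsr, h.1]
  · intro x
    simp only [smul_mulVec, dotProduct_smul, smul_eq_mul]
    exact mul_nonneg hr (h.dotProduct_mulVec_nonneg x)

lemma psd_trace_zero {n : Type*} [Fintype n] {A : Matrix n n ℂ}
    (h : A.PosSemidef) (ht : A.trace = 0) : A = 0 := by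
  classical
  exact h.trace_eq_zero_iff.mp ht

lemma ptrace1_psd {n₁ n₂ : Type*} [Fintype n₁] [Fintype n₂] [DecidableEq n₁]
    {a : Matrix (n₁ × n₂) (n₁ × n₂) ℂ} (h : a.PosSemidef) : (ptrace1 a).PosSemidef := by
  rw [posSemidef_iff_dotProduct_mulVec]
  constructor
  · ext i j
    simp only [ptrace1, conjTranspose_apply, of_apply, star_sum]
    exact Finset.sum_congr rfl fun k _ => congrFun (congrFun h.1 (k, i)) (k, j)
  · intro x
    have key : star x ⬝ᵥ (ptrace1 a *ᵥ x)
        = ∑ k : n₁, star (fun p : n₁ × n₂ => if p.1 = k then x p.2 else 0) ⬝ᵥ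
            (a *ᵥ fun p : n₁ × n₂ => if p.1 = k then x p.2 else 0) := by
      simp only [dotProduct, mulVec, dotProduct, ptrace1, of_apply, Pi.star_apply,
        Fintype.sum_prod_type, apply_ite (star : ℂ → ℂ), star_zero, ite_mul, zero_mul,
        mul_ite, mul_zero, Finset.sum_ite_irrel, Finset.sum_const_zero,
        Finset.sum_ite_eq', Finset.mem_univ, if_true, Finset.mul_sum, Finset.sum_mul]
      rw [show (∑ i : n₂, ∑ j : n₂, ∑ k : n₁, star (x i) * (a (k, i) (k, j) * x j))
            = ∑ i : n₂, ∑ k : n₁, ∑ j : n₂, star (x i) * (a (k, i) (k, j) * x j) from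
          Finset.sum_congr rfl fun i _ => Finset.sum_comm, Finset.sum_comm]
    rw [key]
    exact Finset.sum_nonneg fun k _ => h.dotProduct_mulVec_nonneg _

lemma ptrace2_psd {n₁ n₂ : Type*} [Fintype n₁] [Fintype n₂] [DecidableEq n₂]
    {a : Matrix (n₁ × n₂) (n₁ × n₂) ℂ} (h : a.PosSemidef) : (ptrace2 a).PosSemidef := by
  rw [posSemidef_iff_dotProduct_mulVec]
  constructor
  · ext i j
    simp only [ptrace2, conjTranspose_apply, of_apply, star_sum]
    exact Finset.sum_congr rfl fun k _ => congrFun (congrFun h.1 (i, k)) (j, k)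
  · intro x
    have key : star x ⬝ᵥ (ptrace2 a *ᵥ x)
        = ∑ k : n₂, star (fun p : n₁ × n₂ => if p.2 = k then x p.1 else 0) ⬝ᵥ
            (a *ᵥ fun p : n₁ × n₂ => if p.2 = k then x p.1 else 0) := by
      simp only [dotProduct, mulVec, dotProduct, ptrace2, of_apply, Pi.star_apply,
        Fintype.sum_prod_type, apply_ite (star : ℂ → ℂ), star_zero, ite_mul, zero_mul,
        mul_ite, mul_zero, Finset.sum_ite_irrel, Finset.sum_const_zero,
        Finset.sum_ite_eq', Finset.mem_univ, if_true, Finset.mul_sum, Finset.sum_mul]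
      rw [show (∑ i : n₁, ∑ j : n₁, ∑ k : n₂, star (x i) * (a (i, k) (j, k) * x j))
            = ∑ i : n₁, ∑ k : n₂, ∑ j : n₁, star (x i) * (a (i, k) (j, k) * x j) from
          Finset.sum_congr rfl fun i _ => Finset.sum_comm, Finset.sum_comm]
    rw [key]
    exact Finset.sum_nonneg fun k _ => h.dotProduct_mulVec_nonneg _

lemma ptrace2_kron {n₁ n₂ : Type*} [Fintype n₁] [Fintype n₂]
    (b : Matrix n₁ n₁ ℂ) (c : Matrix n₂ n₂ ℂ) : ptrace2 (b ⊗ₖ c) = c.trace • b := by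
  ext i j
  simp [ptrace2, Matrix.trace, Matrix.diag, Finset.mul_sum, mul_comm]

lemma ptrace1_kron {n₁ n₂ : Type*} [Fintype n₁] [Fintype n₂]
    (b : Matrix n₁ n₁ ℂ) (c : Matrix n₂ n₂ ℂ) : ptrace1 (b ⊗ₖ c) = b.trace • c := by
  ext i j
  simp [ptrace1, Matrix.trace, Matrix.diag, Finset.sum_mul, Finset.mul_sum, mul_comm]

lemma ptrace2_one {n₁ n₂ : Type*} [Fintype n₁] [Fintype n₂] [DecidableEq n₁] [DecidableEq n₂] :
    ptrace2 (1 : Matrix (n₁ × n₂) (n₁ × n₂) ℂ) = (Fintype.card n₂ : ℂ) • 1 := by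
  ext i j
  by_cases hij : i = j <;> simp [ptrace2, Matrix.one_apply, Prod.ext_iff, hij]

lemma ptrace1_one {n₁ n₂ : Type*} [Fintype n₁] [Fintype n₂] [DecidableEq n₁] [DecidableEq n₂] :
    ptrace1 (1 : Matrix (n₁ × n₂) (n₁ × n₂) ℂ) = (Fintype.card n₁ : ℂ) • 1 := by
  ext i j
  by_cases hij : i = j <;> simp [ptrace1, Matrix.one_apply, Prod.ext_iff, hij]

lemma ptrace2_sub {n₁ n₂ : Type*} [Fintype n₂]
    (A B : Matrix (n₁ × n₂) (n₁ × n₂) ℂ) : ptrace2 (A - B) = ptrace2 A - ptrace2 B := by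
  ext i j; simp [ptrace2, Finset.sum_sub_distrib]

lemma ptrace1_sub {n₁ n₂ : Type*} [Fintype n₁]
    (A B : Matrix (n₁ × n₂) (n₁ × n₂) ℂ) : ptrace1 (A - B) = ptrace1 A - ptrace1 B := by
  ext i j; simp [ptrace1, Finset.sum_sub_distrib]

/-- For an effect `a` on `H1 ⊗ H2`, one has `a = a^1 ⊗ a^2` if and only if
`a = 0` or `a = 1`, where `a^1 = (1/n2)·tr_2 a` and `a^2 = (1/n1)·tr_1 a` are the reduced
effects. -/
theorem stmt_8 {n₁ n₂ : Type*} [Fintype n₁] [Fintype n₂] [DecidableEq n₁] [DecidableEq n₂]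
    (a : Matrix (n₁ × n₂) (n₁ × n₂) ℂ)
    (hpos : a.PosSemidef) (hle : (1 - a).PosSemidef) :
    a = ((Fintype.card n₂ : ℂ)⁻¹ • ptrace2 a) ⊗ₖ ((Fintype.card n₁ : ℂ)⁻¹ • ptrace1 a)
      ↔ a = 0 ∨ a = 1 := by
  have hz2 : ptrace2 (0 : Matrix (n₁ × n₂) (n₁ × n₂) ℂ) = 0 := by ext i j; simp [ptrace2]
  have hz1 : ptrace1 (0 : Matrix (n₁ × n₂) (n₁ × n₂) ℂ) = 0 := by ext i j; simp [ptrace1]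
  constructor
  · intro h
    rcases isEmpty_or_nonempty n₁ with h1 | h1
    · left; ext p q; exact h1.elim p.1
    rcases isEmpty_or_nonempty n₂ with h2 | h2
    · left; ext p q; exact h2.elim p.2
    have hn1 : (Fintype.card n₁ : ℂ) ≠ 0 := Nat.cast_ne_zero.mpr Fintype.card_ne_zero
    have hn2 : (Fintype.card n₂ : ℂ) ≠ 0 := Nat.cast_ne_zero.mpr Fintype.card_ne_zero
    set b : Matrix n₁ n₁ ℂ := (Fintype.card n₂ : ℂ)⁻¹ • ptrace2 a with hbdef
    set c : Matrix n₂ n₂ ℂ := (Fintype.card n₁ : ℂ)⁻¹ • ptrace1 a with hcdef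
    by_cases hb : b = 0
    · left; rw [h, hb, zero_kronecker]
    by_cases hc : c = 0
    · left; rw [h, hc, kronecker_zero]
    have h2a : ptrace2 a = (Fintype.card n₂ : ℂ) • b := by
      rw [hbdef, smul_smul, mul_inv_cancel₀ hn2, one_smul]
    have h1a : ptrace1 a = (Fintype.card n₁ : ℂ) • c := by
      rw [hcdef, smul_smul, mul_inv_cancel₀ hn1, one_smul]
    have h2k : ptrace2 a = c.trace • b := by
      conv_lhs => rw [h]
      exact ptrace2_kron b c
    have h1k : ptrace1 a = b.trace • c := by
      conv_lhs => rw [h]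
      exact ptrace1_kron b c
    have htc : c.trace = (Fintype.card n₂ : ℂ) := by
      have h0 : (c.trace - (Fintype.card n₂ : ℂ)) • b = 0 := by
        rw [sub_smul, ← h2k, ← h2a, sub_self]
      rcases smul_eq_zero.mp h0 with h' | h'
      · exact sub_eq_zero.mp h'
      · exact absurd h' hb
    have htb : b.trace = (Fintype.card n₁ : ℂ) := by
      have h0 : (b.trace - (Fintype.card n₁ : ℂ)) • c = 0 := by
        rw [sub_smul, ← h1k, ← h1a, sub_self]
      rcases smul_eq_zero.mp h0 with h' | h'
      · exact sub_eq_zero.mp h'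
      · exact absurd h' hc
    have hinv1 : (0:ℂ) ≤ (Fintype.card n₁ : ℂ)⁻¹ := by
      rw [Complex.nonneg_iff]; constructor <;> simp [Complex.inv_re, Complex.inv_im]
    have hinv2 : (0:ℂ) ≤ (Fintype.card n₂ : ℂ)⁻¹ := by
      rw [Complex.nonneg_iff]; constructor <;> simp [Complex.inv_re, Complex.inv_im]
    have hc1 : c = 1 := by
      have hexp : (1 : Matrix n₂ n₂ ℂ) - c
          = (Fintype.card n₁ : ℂ)⁻¹ • ptrace1 (1 - a) := by
        rw [ptrace1_sub, ptrace1_one, smul_sub, smul_smul, inv_mul_cancel₀ hn1, one_smul,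
          hcdef]
      have hpsd : ((1 : Matrix n₂ n₂ ℂ) - c).PosSemidef := by
        rw [hexp]; exact psd_smul'_s8 (ptrace1_psd hle) hinv1
      have htr : ((1 : Matrix n₂ n₂ ℂ) - c).trace = 0 := by
        rw [trace_sub, trace_one, htc, sub_self]
      have := psd_trace_zero hpsd htr
      rw [sub_eq_zero] at this
      exact this.symm
    have hb1 : b = 1 := by
      have hexp : (1 : Matrix n₁ n₁ ℂ) - b
          = (Fintype.card n₂ : ℂ)⁻¹ • ptrace2 (1 - a) := by
        rw [ptrace2_sub, ptrace2_one, smul_sub, smul_smul, inv_mul_cancel₀ hn2, one_smul,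
          hbdef]
      have hpsd : ((1 : Matrix n₁ n₁ ℂ) - b).PosSemidef := by
        rw [hexp]; exact psd_smul'_s8 (ptrace2_psd hle) hinv2
      have htr : ((1 : Matrix n₁ n₁ ℂ) - b).trace = 0 := by
        rw [trace_sub, trace_one, htb, sub_self]
      have := psd_trace_zero hpsd htr
      rw [sub_eq_zero] at this
      exact this.symm
    right
    rw [h, hb1, hc1, one_kronecker_one]
  · rintro (rfl | rfl)
    · rw [hz2, hz1, smul_zero, smul_zero, zero_kronecker]
    · rcases isEmpty_or_nonempty n₁ with h1 | h1
      · ext p q; exact h1.elim p.1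
      rcases isEmpty_or_nonempty n₂ with h2 | h2
      · ext p q; exact h2.elim p.2
      have hn1 : (Fintype.card n₁ : ℂ) ≠ 0 := Nat.cast_ne_zero.mpr Fintype.card_ne_zero
      have hn2 : (Fintype.card n₂ : ℂ) ≠ 0 := Nat.cast_ne_zero.mpr Fintype.card_ne_zero
      rw [ptrace2_one, ptrace1_one, smul_smul, smul_smul, inv_mul_cancel₀ hn2,
        inv_mul_cancel₀ hn1, one_smul, one_smul, one_kronecker_one]
end

section
/- Let H = H1 ⊗ H2 with dim H1 = n1, dim H2 = n2, let ψ ∈ H be a unit vector, and let a = |ψ⟩⟨ψ| be the corresponding atom. Then a is factorized (a = b ⊗ c for some effects b on H1, c on H2) if and only if both reduced effects a^1 and a^2 are indecomposable, where an effect is indecomposable if it has the form λ·|φ⟩⟨φ| for some unit vector φ and some λ ∈ [0,1]. -/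
open Matrix ComplexOrder Kronecker

/-- An effect is indecomposable if it is `λ·|φ⟩⟨φ|` for a unit vector `φ` and `λ ∈ [0,1]`. -/
def Indecomposable {m : Type*} [Fintype m] (b : Matrix m m ℂ) : Prop :=
  ∃ (t : ℝ) (φ : m → ℂ), 0 ≤ t ∧ t ≤ 1 ∧ star φ ⬝ᵥ φ = 1 ∧
    b = (t : ℂ) • Matrix.vecMulVec φ (star φ)

/- ### Auxiliary lemmas -/

lemma aux_dot_expand {m : Type*} [Fintype m] (v w : m → ℂ) :
    star v ⬝ᵥ w = ∑ i, (starRingEnd ℂ) (v i) * w i := by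
  simp [dotProduct, Complex.star_def]

lemma aux_sum_conj_mul_self_eq_zero {ι : Type*} [Fintype ι] (v : ι → ℂ)
    (h : ∑ x, (starRingEnd ℂ) (v x) * v x = 0) (x : ι) : v x = 0 := by
  have h2 : ∑ x, Complex.normSq (v x) = 0 := by
    have : ((∑ x, Complex.normSq (v x) : ℝ) : ℂ) = 0 := by
      push_cast
      rw [← h]
      exact Finset.sum_congr rfl fun x _ => by rw [Complex.normSq_eq_conj_mul_self]
    exact_mod_cast this
  have := (Finset.sum_eq_zero_iff_of_nonneg (fun i _ => Complex.normSq_nonneg (v i))).mp h2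
  exact Complex.normSq_eq_zero.mp (this x (Finset.mem_univ x))

lemma aux_quadform_vecMulVec {m : Type*} [Fintype m] (v x : m → ℂ) :
    star x ⬝ᵥ (Matrix.vecMulVec v (star v)) *ᵥ x
      = star (star v ⬝ᵥ x) * (star v ⬝ᵥ x) := by
  have hc : star (star v ⬝ᵥ x) = ∑ i, v i * (starRingEnd ℂ) (x i) := by
    simp only [dotProduct, Pi.star_apply, Complex.star_def, map_sum, _root_.map_mul,
      Complex.conj_conj]
  rw [hc, show star v ⬝ᵥ x = ∑ j, (starRingEnd ℂ) (v j) * x j from by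
    simp [dotProduct, Complex.star_def], Finset.sum_mul_sum]
  simp only [dotProduct, Matrix.mulVec, Matrix.vecMulVec_apply, Pi.star_apply,
    Complex.star_def, Finset.mul_sum]
  refine Finset.sum_congr rfl fun i _ => Finset.sum_congr rfl fun j _ => ?_
  ring

lemma aux_psd_vecMulVec {m : Type*} [Fintype m] (v : m → ℂ) :
    (Matrix.vecMulVec v (star v)).PosSemidef := by
  rw [Matrix.posSemidef_iff_dotProduct_mulVec]
  constructor
  · ext i j
    simp [Matrix.conjTranspose_apply, Matrix.vecMulVec_apply, mul_comm]
  · intro x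
    rw [aux_quadform_vecMulVec]
    exact star_mul_self_nonneg _

lemma aux_vecMulVec_mul_vecMulVec {m : Type*} [Fintype m] (v : m → ℂ) (hv : star v ⬝ᵥ v = 1) :
    Matrix.vecMulVec v (star v) * Matrix.vecMulVec v (star v) = Matrix.vecMulVec v (star v) := by
  ext i j
  simp only [Matrix.mul_apply, Matrix.vecMulVec_apply, Pi.star_apply, Complex.star_def]
  have : ∀ k, v i * (starRingEnd ℂ) (v k) * (v k * (starRingEnd ℂ) (v j))
      = (v i * (starRingEnd ℂ) (v j)) * ((starRingEnd ℂ) (v k) * v k) := fun k => by ring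
  rw [Finset.sum_congr rfl fun k _ => this k, ← Finset.mul_sum]
  have hv' : ∑ k, (starRingEnd ℂ) (v k) * v k = 1 := by
    rw [← aux_dot_expand v v, hv]
  rw [hv', mul_one]

lemma aux_psd_one_sub_vecMulVec {m : Type*} [Fintype m] [DecidableEq m] (v : m → ℂ)
    (hv : star v ⬝ᵥ v = 1) :
    (1 - Matrix.vecMulVec v (star v)).PosSemidef := by
  set K := Matrix.vecMulVec v (star v) with hK
  have hKK : K * K = K := aux_vecMulVec_mul_vecMulVec v hv
  have hherm : (1 - K)ᴴ = 1 - K := by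
    have h1 : Kᴴ = K := (aux_psd_vecMulVec v).1
    rw [Matrix.conjTranspose_sub, h1, Matrix.conjTranspose_one]
  have hproj : (1 - K) * (1 - K) = 1 - K := by
    simp only [sub_mul, mul_sub, one_mul, mul_one, hKK]
    abel
  have := Matrix.posSemidef_conjTranspose_mul_self (1 - K)
  rwa [hherm, hproj] at this

lemma aux_normalize_prod {n₁ n₂ : Type*} [Fintype n₁] [Fintype n₂]
    (ψ : n₁ × n₂ → ℂ) (hψ : star ψ ⬝ᵥ ψ = 1)
    (φ' : n₁ → ℂ) (χ' : n₂ → ℂ) (h : ∀ i k, ψ (i, k) = φ' i * χ' k) :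
    ∃ (φ : n₁ → ℂ) (χ : n₂ → ℂ), star φ ⬝ᵥ φ = 1 ∧ star χ ⬝ᵥ χ = 1 ∧
      ∀ i k, ψ (i, k) = φ i * χ k := by
  set A := ∑ i, Complex.normSq (φ' i) with hAdef
  set B := ∑ k, Complex.normSq (χ' k) with hBdef
  have hA : ((A : ℝ) : ℂ) = ∑ i, (starRingEnd ℂ) (φ' i) * φ' i := by
    rw [hAdef]
    push_cast
    exact Finset.sum_congr rfl fun i _ => Complex.normSq_eq_conj_mul_self
  have hB : ((B : ℝ) : ℂ) = ∑ k, (starRingEnd ℂ) (χ' k) * χ' k := by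
    rw [hBdef]
    push_cast
    exact Finset.sum_congr rfl fun k _ => Complex.normSq_eq_conj_mul_self
  have hABC : ((A : ℝ) : ℂ) * ((B : ℝ) : ℂ) = 1 := by
    rw [hA, hB, Finset.sum_mul_sum, ← hψ, aux_dot_expand, Fintype.sum_prod_type]
    refine Finset.sum_congr rfl fun i _ => Finset.sum_congr rfl fun k _ => ?_
    rw [h i k, _root_.map_mul]
    ring
  have hAB : A * B = 1 := by exact_mod_cast hABC
  have hAnn : 0 ≤ A := Finset.sum_nonneg fun i _ => Complex.normSq_nonneg _
  have hBnn : 0 ≤ B := Finset.sum_nonneg fun k _ => Complex.normSq_nonneg _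
  have hApos : 0 < A := by nlinarith
  set s := Real.sqrt A with hs
  have hspos : 0 < s := Real.sqrt_pos.mpr hApos
  have hss : s * s = A := Real.mul_self_sqrt hAnn
  refine ⟨fun i => ((s⁻¹ : ℝ) : ℂ) * φ' i, fun k => ((s : ℝ) : ℂ) * χ' k, ?_, ?_, ?_⟩
  · rw [aux_dot_expand]
    have : ∀ i, (starRingEnd ℂ) (((s⁻¹ : ℝ) : ℂ) * φ' i) * (((s⁻¹ : ℝ) : ℂ) * φ' i)
        = (((s⁻¹ * s⁻¹ : ℝ) : ℂ)) * ((starRingEnd ℂ) (φ' i) * φ' i) := by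
      intro i
      simp only [_root_.map_mul, Complex.conj_ofReal]
      push_cast
      ring
    rw [Finset.sum_congr rfl fun i _ => this i, ← Finset.mul_sum, ← hA,
      ← Complex.ofReal_mul]
    have : s⁻¹ * s⁻¹ * A = 1 := by
      field_simp
      nlinarith
    rw [this, Complex.ofReal_one]
  · rw [aux_dot_expand]
    have : ∀ k, (starRingEnd ℂ) (((s : ℝ) : ℂ) * χ' k) * (((s : ℝ) : ℂ) * χ' k)
        = (((s * s : ℝ) : ℂ)) * ((starRingEnd ℂ) (χ' k) * χ' k) := by
      intro k
      simp only [_root_.map_mul, Complex.conj_ofReal]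
      push_cast
      ring
    rw [Finset.sum_congr rfl fun k _ => this k, ← Finset.mul_sum, ← hB, hss,
      ← Complex.ofReal_mul, hAB, Complex.ofReal_one]
  · intro i k
    rw [h i k]
    have h1 : ((s⁻¹ : ℝ) : ℂ) * ((s : ℝ) : ℂ) = 1 := by
      rw [← Complex.ofReal_mul, inv_mul_cancel₀ hspos.ne', Complex.ofReal_one]
    calc φ' i * χ' k = (((s⁻¹ : ℝ) : ℂ) * ((s : ℝ) : ℂ)) * (φ' i * χ' k) := by
          rw [h1, one_mul]
      _ = ((s⁻¹ : ℝ) : ℂ) * φ' i * (((s : ℝ) : ℂ) * χ' k) := by ring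

lemma aux_ptrace2_prod {n₁ n₂ : Type*} [Fintype n₁] [Fintype n₂]
    (ψ : n₁ × n₂ → ℂ) (φ : n₁ → ℂ) (χ : n₂ → ℂ)
    (hχ : star χ ⬝ᵥ χ = 1) (h : ∀ i k, ψ (i, k) = φ i * χ k) :
    ptrace2 (Matrix.vecMulVec ψ (star ψ)) = Matrix.vecMulVec φ (star φ) := by
  have hχ' : ∑ k, (starRingEnd ℂ) (χ k) * χ k = 1 := by rw [← aux_dot_expand χ χ, hχ]
  ext i j
  simp only [ptrace2, Matrix.of_apply, Matrix.vecMulVec_apply, Pi.star_apply, Complex.star_def]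
  have : ∀ k, ψ (i, k) * (starRingEnd ℂ) (ψ (j, k))
      = (φ i * (starRingEnd ℂ) (φ j)) * ((starRingEnd ℂ) (χ k) * χ k) := by
    intro k
    rw [h i k, h j k, _root_.map_mul]
    ring
  rw [Finset.sum_congr rfl fun k _ => this k, ← Finset.mul_sum, hχ', mul_one]

lemma aux_ptrace1_prod {n₁ n₂ : Type*} [Fintype n₁] [Fintype n₂]
    (ψ : n₁ × n₂ → ℂ) (φ : n₁ → ℂ) (χ : n₂ → ℂ)
    (hφ : star φ ⬝ᵥ φ = 1) (h : ∀ i k, ψ (i, k) = φ i * χ k) :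
    ptrace1 (Matrix.vecMulVec ψ (star ψ)) = Matrix.vecMulVec χ (star χ) := by
  have hφ' : ∑ i, (starRingEnd ℂ) (φ i) * φ i = 1 := by rw [← aux_dot_expand φ φ, hφ]
  ext k l
  simp only [ptrace1, Matrix.of_apply, Matrix.vecMulVec_apply, Pi.star_apply, Complex.star_def]
  have : ∀ i, ψ (i, k) * (starRingEnd ℂ) (ψ (i, l))
      = (χ k * (starRingEnd ℂ) (χ l)) * ((starRingEnd ℂ) (φ i) * φ i) := by
    intro i
    rw [h i k, h i l, _root_.map_mul]
    ring
  rw [Finset.sum_congr rfl fun i _ => this i, ← Finset.mul_sum, hφ', mul_one]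

lemma aux_prod_of_reduced {n₁ n₂ : Type*} [Fintype n₁] [Fintype n₂]
    (ψ : n₁ × n₂ → ℂ) (hψ : star ψ ⬝ᵥ ψ = 1) (φ : n₁ → ℂ) (hφ : star φ ⬝ᵥ φ = 1)
    (h : ptrace2 (Matrix.vecMulVec ψ (star ψ)) = Matrix.vecMulVec φ (star φ)) :
    ∃ χ : n₂ → ℂ, star χ ⬝ᵥ χ = 1 ∧ ∀ i k, ψ (i, k) = φ i * χ k := by
  set χ : n₂ → ℂ := fun k => ∑ i, (starRingEnd ℂ) (φ i) * ψ (i, k) with hχdef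
  have hφ' : ∑ i, (starRingEnd ℂ) (φ i) * φ i = 1 := by rw [← aux_dot_expand φ φ, hφ]
  have hptr : ∀ j i, ∑ k, ψ (j, k) * (starRingEnd ℂ) (ψ (i, k))
      = φ j * (starRingEnd ℂ) (φ i) := by
    intro j i
    have := congrFun (congrFun h j) i
    simpa [ptrace2, Matrix.vecMulVec_apply, Complex.star_def] using this
  have hconj : ∀ k, (starRingEnd ℂ) (χ k) = ∑ i, φ i * (starRingEnd ℂ) (ψ (i, k)) := by
    intro k
    rw [hχdef]
    simp only [map_sum, _root_.map_mul, Complex.conj_conj]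
  have hχ' : ∑ k, (starRingEnd ℂ) (χ k) * χ k = 1 := by
    calc ∑ k, (starRingEnd ℂ) (χ k) * χ k
        = ∑ k, ∑ i, ∑ j, (φ i * (starRingEnd ℂ) (ψ (i, k)))
            * ((starRingEnd ℂ) (φ j) * ψ (j, k)) := by
          refine Finset.sum_congr rfl fun k _ => ?_
          rw [hconj k, hχdef, Finset.sum_mul_sum]
      _ = ∑ i, ∑ j, ∑ k, (φ i * (starRingEnd ℂ) (ψ (i, k)))
            * ((starRingEnd ℂ) (φ j) * ψ (j, k)) := by
          rw [Finset.sum_comm]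
          exact Finset.sum_congr rfl fun i _ => Finset.sum_comm
      _ = ∑ i, ∑ j, ((starRingEnd ℂ) (φ i) * φ i) * ((starRingEnd ℂ) (φ j) * φ j) := by
          refine Finset.sum_congr rfl fun i _ => Finset.sum_congr rfl fun j _ => ?_
          calc ∑ k, (φ i * (starRingEnd ℂ) (ψ (i, k))) * ((starRingEnd ℂ) (φ j) * ψ (j, k))
              = (φ i * (starRingEnd ℂ) (φ j))
                  * ∑ k, ψ (j, k) * (starRingEnd ℂ) (ψ (i, k)) := by
                rw [Finset.mul_sum]
                exact Finset.sum_congr rfl fun k _ => by ring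
            _ = (φ i * (starRingEnd ℂ) (φ j)) * (φ j * (starRingEnd ℂ) (φ i)) := by
                rw [hptr j i]
            _ = ((starRingEnd ℂ) (φ i) * φ i) * ((starRingEnd ℂ) (φ j) * φ j) := by ring
      _ = (∑ i, (starRingEnd ℂ) (φ i) * φ i) * (∑ j, (starRingEnd ℂ) (φ j) * φ j) := by
          rw [Finset.sum_mul_sum]
      _ = 1 := by rw [hφ', one_mul]
  have hχk : ∀ k, ∑ i, (starRingEnd ℂ) (φ i) * ψ (i, k) = χ k := fun k => rfl
  have hψ1 : ∑ i, ∑ k, (starRingEnd ℂ) (ψ (i, k)) * ψ (i, k) = 1 := by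
    rw [← hψ, aux_dot_expand ψ ψ, Fintype.sum_prod_type]
  have hzero : ∀ p : n₁ × n₂, ψ p - φ p.1 * χ p.2 = 0 := by
    refine aux_sum_conj_mul_self_eq_zero (fun p => ψ p - φ p.1 * χ p.2) ?_
    have hexp : ∀ (i : n₁) (k : n₂),
        (starRingEnd ℂ) (ψ (i, k) - φ i * χ k) * (ψ (i, k) - φ i * χ k)
          = (starRingEnd ℂ) (ψ (i, k)) * ψ (i, k)
            - χ k * (φ i * (starRingEnd ℂ) (ψ (i, k)))
            - (starRingEnd ℂ) (χ k) * ((starRingEnd ℂ) (φ i) * ψ (i, k))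
            + ((starRingEnd ℂ) (φ i) * φ i) * ((starRingEnd ℂ) (χ k) * χ k) := by
      intro i k
      simp only [map_sub, _root_.map_mul]
      ring
    have hinner : ∀ k : n₂,
        ∑ i, (starRingEnd ℂ) (ψ (i, k) - φ i * χ k) * (ψ (i, k) - φ i * χ k)
          = (∑ i, (starRingEnd ℂ) (ψ (i, k)) * ψ (i, k)) - (starRingEnd ℂ) (χ k) * χ k := by
      intro k
      simp only [hexp]
      rw [Finset.sum_add_distrib, Finset.sum_sub_distrib, Finset.sum_sub_distrib,
        ← Finset.mul_sum, ← Finset.mul_sum, ← Finset.sum_mul, ← hconj k, hχk k, hφ', one_mul]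
      ring
    rw [Fintype.sum_prod_type_right]
    rw [Finset.sum_congr rfl fun k (_ : k ∈ Finset.univ) => hinner k, Finset.sum_sub_distrib,
      Finset.sum_comm, hψ1, hχ']
    ring
  refine ⟨χ, by rw [aux_dot_expand χ χ, hχ'], fun i k => ?_⟩
  have := hzero (i, k)
  simp only at this
  exact sub_eq_zero.mp this

/-- An atom `a = |ψ⟩⟨ψ|` on `H1 ⊗ H2` is factorized if and only if both
reduced effects `a^1` and `a^2` are indecomposable. -/
theorem stmt_9 {n₁ n₂ : Type*} [Fintype n₁] [Fintype n₂] [DecidableEq n₁] [DecidableEq n₂]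
    (ψ : n₁ × n₂ → ℂ) (hψ : star ψ ⬝ᵥ ψ = 1)
    (a : Matrix (n₁ × n₂) (n₁ × n₂) ℂ) (ha : a = Matrix.vecMulVec ψ (star ψ)) :
    (∃ (b : Matrix n₁ n₁ ℂ) (c : Matrix n₂ n₂ ℂ),
        b.PosSemidef ∧ (1 - b).PosSemidef ∧ c.PosSemidef ∧ (1 - c).PosSemidef ∧
        a = b ⊗ₖ c)
    ↔ (Indecomposable ((Fintype.card n₂ : ℂ)⁻¹ • ptrace2 a) ∧
        Indecomposable ((Fintype.card n₁ : ℂ)⁻¹ • ptrace1 a)) := by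
  subst ha
  have hne : Nonempty (n₁ × n₂) := by
    by_contra hE
    rw [not_nonempty_iff] at hE
    rw [aux_dot_expand ψ ψ] at hψ
    simp [Finset.univ_eq_empty] at hψ
  have hne1 : Nonempty n₁ := ⟨(Classical.choice hne).1⟩
  have hne2 : Nonempty n₂ := ⟨(Classical.choice hne).2⟩
  have hc1 : 1 ≤ Fintype.card n₁ := Fintype.card_pos
  have hc2 : 1 ≤ Fintype.card n₂ := Fintype.card_pos
  constructor
  · rintro ⟨b, c, -, -, -, -, habc⟩
    have hexists : ∃ p : n₁ × n₂, ψ p ≠ 0 := by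
      by_contra hq
      push_neg at hq
      rw [aux_dot_expand ψ ψ] at hψ
      simp [hq] at hψ
    obtain ⟨⟨i₀, k₀⟩, hp0⟩ := hexists
    have hd : (starRingEnd ℂ) (ψ (i₀, k₀)) ≠ 0 := by simpa using hp0
    have hent : ∀ i k, ψ (i, k) * (starRingEnd ℂ) (ψ (i₀, k₀)) = b i i₀ * c k k₀ := by
      intro i k
      have := congrFun (congrFun habc (i, k)) (i₀, k₀)
      simpa [Matrix.vecMulVec_apply, Matrix.kroneckerMap_apply, Complex.star_def] using this
    have hprod' : ∀ i k, ψ (i, k) = (b i i₀ / (starRingEnd ℂ) (ψ (i₀, k₀))) * c k k₀ := by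
      intro i k
      rw [div_mul_eq_mul_div, eq_div_iff hd]
      exact hent i k
    obtain ⟨φ, χ, hφ, hχ, hprod⟩ := aux_normalize_prod ψ hψ _ _ hprod'
    constructor
    · refine ⟨(Fintype.card n₂ : ℝ)⁻¹, φ, by positivity,
        inv_le_one_of_one_le₀ (by exact_mod_cast hc2), hφ, ?_⟩
      rw [aux_ptrace2_prod ψ φ χ hχ hprod]
      congr 1
      push_cast
      ring
    · refine ⟨(Fintype.card n₁ : ℝ)⁻¹, χ, by positivity,
        inv_le_one_of_one_le₀ (by exact_mod_cast hc1), hχ, ?_⟩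
      rw [aux_ptrace1_prod ψ φ χ hφ hprod]
      congr 1
      push_cast
      ring
  · rintro ⟨⟨t, φ, ht0, ht1, hφ, heq⟩, -⟩
    have htr1 : (ptrace2 (Matrix.vecMulVec ψ (star ψ))).trace = 1 := by
      rw [← hψ, aux_dot_expand ψ ψ, Fintype.sum_prod_type, Matrix.trace]
      simp only [Matrix.diag_apply, ptrace2, Matrix.of_apply, Matrix.vecMulVec_apply,
        Pi.star_apply, Complex.star_def]
      exact Finset.sum_congr rfl fun i _ => Finset.sum_congr rfl fun k _ => mul_comm _ _
    have htr2 : (Matrix.vecMulVec φ (star φ)).trace = 1 := by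
      rw [← hφ, aux_dot_expand φ φ, Matrix.trace]
      simp only [Matrix.diag_apply, Matrix.vecMulVec_apply, Pi.star_apply, Complex.star_def]
      exact Finset.sum_congr rfl fun i _ => mul_comm _ _
    have htr := congrArg Matrix.trace heq
    rw [Matrix.trace_smul, Matrix.trace_smul, htr1, htr2, smul_eq_mul, smul_eq_mul,
      mul_one, mul_one] at htr
    have hc2C : (Fintype.card n₂ : ℂ) ≠ 0 := Nat.cast_ne_zero.mpr (Nat.one_le_iff_ne_zero.mp hc2)
    have hpt : ptrace2 (Matrix.vecMulVec ψ (star ψ)) = Matrix.vecMulVec φ (star φ) := by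
      have h2 := congrArg (fun M => (Fintype.card n₂ : ℂ) • M) heq
      rw [smul_smul, smul_smul, ← htr, mul_inv_cancel₀ hc2C, one_smul, one_smul] at h2
      exact h2
    obtain ⟨χ, hχ, hprod⟩ := aux_prod_of_reduced ψ hψ φ hφ hpt
    refine ⟨Matrix.vecMulVec φ (star φ), Matrix.vecMulVec χ (star χ),
      aux_psd_vecMulVec φ, aux_psd_one_sub_vecMulVec φ hφ,
      aux_psd_vecMulVec χ, aux_psd_one_sub_vecMulVec χ hχ, ?_⟩
    ext ⟨i, k⟩ ⟨j, l⟩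
    simp only [Matrix.vecMulVec_apply, Matrix.kroneckerMap_apply, Pi.star_apply,
      Complex.star_def]
    rw [hprod i k, hprod j l, _root_.map_mul]
    ring
end
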